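/- For the improved graph G̃_k: if every independent set I of G_k satisfies w_k(I) ≤ |{P ∈ 𝒫_k : P ∩ I ≠ ∅}|, then every independent set Ĩ of G̃_k (obtained by adding a weight-1 diagonal d_P adjacent to all of P for each probe P) satisfies w̃_k(Ĩ) ≤ |𝒫_k|. Abstractly: let G be a graph, 𝒫 a family of independent sets, w a weight function with w(I) ≤ |{P ∈ 𝒫 : P ∩ I ≠ ∅}| for all independent I; let G' add a diagonal d_P of weight 1 for each P ∈ 𝒫. Then every independent set I' of G' has total weight at most |𝒫|. -/

import Mathlib

theorem improved_weight_bound {V : Type*} [DecidableEq V]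
    (G : SimpleGraph V) (Ps : Finset (Finset V))
    (hPindep : ∀ P ∈ Ps, ∀ u ∈ P, ∀ v ∈ P, ¬ G.Adj u v)
    (w : V → ℕ)
    (hw : ∀ I : Finset V, (∀ u ∈ I, ∀ v ∈ I, ¬ G.Adj u v) →
      ∑ v ∈ I, w v ≤ (Ps.filter (fun P => (P ∩ I).Nonempty)).card)
    (G' : SimpleGraph (V ⊕ {P // P ∈ Ps}))
    (hVV : ∀ u v : V, G'.Adj (Sum.inl u) (Sum.inl v) ↔ G.Adj u v)
    (hVD : ∀ (u : V) (P : {P // P ∈ Ps}),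
      G'.Adj (Sum.inl u) (Sum.inr P) ↔ u ∈ P.1)
    (hDD : ∀ P P' : {P // P ∈ Ps}, ¬ G'.Adj (Sum.inr P) (Sum.inr P'))
    (w' : V ⊕ {P // P ∈ Ps} → ℕ)
    (hw'V : ∀ v : V, w' (Sum.inl v) = w v)
    (hw'D : ∀ P : {P // P ∈ Ps}, w' (Sum.inr P) = 1) :
    ∀ I' : Finset (V ⊕ {P // P ∈ Ps}),
      (∀ a ∈ I', ∀ b ∈ I', ¬ G'.Adj a b) →
      ∑ x ∈ I', w' x ≤ Ps.card := by
  intro I' hI'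
  classical
  set I : Finset V := I'.toLeft with hI
  set D : Finset {P // P ∈ Ps} := I'.toRight with hD
  -- split the sum
  have hsplit : ∑ x ∈ I', w' x = ∑ v ∈ I, w v + D.card := by
    rw [← Finset.toLeft_disjSum_toRight (u := I'), Finset.sum_disjSum]
    congr 1
    · exact Finset.sum_congr rfl fun v _ => hw'V v
    · rw [Finset.sum_congr rfl fun P _ => hw'D P, Finset.sum_const, smul_eq_mul, mul_one]
  have hIindep : ∀ u ∈ I, ∀ v ∈ I, ¬ G.Adj u v := by
    intro u hu v hv
    rw [← hVV]
    exact hI' _ (Finset.mem_toLeft.mp hu) _ (Finset.mem_toLeft.mp hv)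
  have h1 : ∑ v ∈ I, w v ≤ (Ps.filter (fun P => (P ∩ I).Nonempty)).card := hw I hIindep
  have h2 : D.card ≤ (Ps.filter (fun P => ¬ (P ∩ I).Nonempty)).card := by
    have : D.image Subtype.val ⊆ Ps.filter (fun P => ¬ (P ∩ I).Nonempty) := by
      intro P hP
      simp only [Finset.mem_image] at hP
      obtain ⟨Q, hQ, rfl⟩ := hP
      rw [Finset.mem_filter]
      refine ⟨Q.2, ?_⟩
      rintro ⟨u, hu⟩
      rw [Finset.mem_inter] at hu
      exact hI' _ (Finset.mem_toLeft.mp hu.2) _ (Finset.mem_toRight.mp hQ)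
        ((hVD u Q).mpr hu.1)
    calc D.card = (D.image Subtype.val).card :=
          (Finset.card_image_of_injective _ Subtype.val_injective).symm
      _ ≤ _ := Finset.card_le_card this
  calc ∑ x ∈ I', w' x = ∑ v ∈ I, w v + D.card := hsplit
    _ ≤ (Ps.filter (fun P => (P ∩ I).Nonempty)).card
        + (Ps.filter (fun P => ¬ (P ∩ I).Nonempty)).card := Nat.add_le_add h1 h2
    _ = Ps.card := Finset.card_filter_add_card_filter_not _
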